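/- Assume the products are indexed so that v_1 ≥ v_2 ≥ … ≥ v_n. Then some preference-weight-ordered assortment is a 1/2-approximation for the static maximum load assortment problem: there exists m ∈ {1,…,n} with E(M({1,…,m})) ≥ (1/2) · max_{S ⊆ {1,…,n}} E(M(S)). -/

import Mathlib

open Finset

/-- MNL choice probability of product `i` when assortment `S` is offered. -/
noncomputable def phi {n : ℕ} (v : Fin n → ℝ) (S : Finset (Fin n)) (i : Fin n) : ℝ :=
  v i / (1 + ∑ j ∈ S, v j)

/-- MNL no-purchase probability when assortment `S` is offered. -/
noncomputable def phi0 {n : ℕ} (v : Fin n → ℝ) (S : Finset (Fin n)) : ℝ :=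
  1 / (1 + ∑ j ∈ S, v j)

/-- Probability of a single customer's choice when assortment `S` is offered:
`some i` (select product `i ∈ S`) has probability `φ_i(S)`, products outside `S`
are never selected, and `none` (no purchase) has probability `φ_0(S)`. -/
noncomputable def chooseProb {n : ℕ} (v : Fin n → ℝ) (S : Finset (Fin n)) :
    Option (Fin n) → ℝ
  | none => phi0 v S
  | some i => if i ∈ S then phi v S i else 0

/-- `staticEM T v S` is the expected maximum load `E(M(S))` when assortment `S` is
statically offered to `T` customers making independent MNL choices:
`M(S) = max_{i ∈ S} L_i(S)` where `L_i(S)` counts the customers selecting `i`. -/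
noncomputable def staticEM {n : ℕ} (T : ℕ) (v : Fin n → ℝ) (S : Finset (Fin n)) : ℝ :=
  ∑ f : Fin T → Option (Fin n),
    (∏ t, chooseProb v S (f t)) *
      ((S.sup fun i => (Finset.univ.filter fun t => f t = some i).card : ℕ) : ℝ)

section Aux
variable {n : ℕ} {v : Fin n → ℝ} {S : Finset (Fin n)}

lemma one_add_sum_pos (hv : ∀ i, 0 < v i) (S : Finset (Fin n)) : 0 < 1 + ∑ j ∈ S, v j := by
  have : 0 ≤ ∑ j ∈ S, v j := Finset.sum_nonneg fun j _ => (hv j).le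
  linarith

lemma chooseProb_nonneg (hv : ∀ i, 0 < v i) (S : Finset (Fin n)) (o : Option (Fin n)) :
    0 ≤ chooseProb v S o := by
  cases o with
  | none =>
    simp only [chooseProb, phi0]
    exact div_nonneg zero_le_one (one_add_sum_pos hv S).le
  | some i =>
    simp only [chooseProb, phi]
    split
    · exact div_nonneg (hv i).le (one_add_sum_pos hv S).le
    · exact le_rfl

lemma chooseProb_some_mem (hv : ∀ i, 0 < v i) {i : Fin n} (hi : i ∈ S) :
    chooseProb v S (some i) = v i / (1 + ∑ j ∈ S, v j) := by
  simp [chooseProb, phi, hi]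

lemma sum_chooseProb (hv : ∀ i, 0 < v i) (S : Finset (Fin n)) :
    ∑ o : Option (Fin n), chooseProb v S o = 1 := by
  rw [Fintype.sum_option]
  have h1 : ∑ i : Fin n, chooseProb v S (some i)
      = (∑ j ∈ S, v j) / (1 + ∑ j ∈ S, v j) := by
    simp only [chooseProb, phi]
    rw [Finset.sum_ite_mem, Finset.univ_inter, Finset.sum_div]
  rw [h1]
  simp only [chooseProb, phi0]
  rw [← add_div, div_eq_one_iff_eq (one_add_sum_pos hv S).ne']

end Aux

lemma sum_prod_ind {T : ℕ} {O : Type} [Fintype O] [DecidableEq O] (K : Fin T → O → ℝ)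
    (hrow : ∀ t, ∑ o, K t o = 1) (t₀ : Fin T) (b : O) :
    ∑ h : Fin T → O, (∏ t, K t (h t)) * (if h t₀ = b then (1:ℝ) else 0)
      = K t₀ b := by
  have h1 : ∀ h : Fin T → O,
      (∏ t, K t (h t)) * (if h t₀ = b then (1:ℝ) else 0)
      = ∏ t, (K t (h t) * (if t = t₀ then (if h t = b then (1:ℝ) else 0) else 1)) := by
    intro h
    rw [Finset.prod_mul_distrib]
    congr 1
    rw [Finset.prod_ite_eq' Finset.univ t₀ (fun t => if h t = b then (1:ℝ) else 0)]
    simp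
  simp only [h1]
  rw [← Fintype.piFinset_univ, ← Finset.prod_univ_sum (fun _ => (univ : Finset O))
    (fun t o => K t o * (if t = t₀ then (if o = b then (1:ℝ) else 0) else 1))]
  have h2 : ∀ t : Fin T, (∑ o : O, K t o * (if t = t₀ then (if o = b then (1:ℝ) else 0) else 1))
      = if t = t₀ then K t₀ b else 1 := by
    intro t
    by_cases ht : t = t₀
    · subst ht
      simp only [if_pos rfl, if_true]
      simp only [mul_ite, mul_one, mul_zero]
      rw [Finset.sum_ite_eq' Finset.univ b (fun o => K t o)]
      simp
    · simp only [if_neg ht]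
      simp [hrow t]
  simp only [h2]
  rw [Finset.prod_ite_eq' Finset.univ t₀ (fun _ => K t₀ b)]
  simp

lemma inner_bound {n T : ℕ} (S P : Finset (Fin n)) (g : Fin n → Fin n)
    (K : Option (Fin n) → Option (Fin n) → ℝ)
    (hK0 : ∀ o' o, 0 ≤ K o' o) (hrow : ∀ o', ∑ o, K o' o = 1)
    (hKg : ∀ x ∈ S, (1:ℝ)/2 ≤ K (some x) (some (g x)))
    (hg : ∀ x ∈ S, g x ∈ P) (f : Fin T → Option (Fin n)) :
    (1/2) * ((S.sup fun i => (Finset.univ.filter fun t => f t = some i).card : ℕ) : ℝ)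
      ≤ ∑ h : Fin T → Option (Fin n), (∏ t, K (f t) (h t)) *
          ((P.sup fun i => (Finset.univ.filter fun t => h t = some i).card : ℕ) : ℝ) := by
  rcases S.eq_empty_or_nonempty with hS | hS
  · subst hS
    simp only [Finset.sup_empty]
    simp only [Nat.bot_eq_zero, Nat.cast_zero, mul_zero]
    refine Finset.sum_nonneg fun h _ => mul_nonneg (Finset.prod_nonneg fun t _ => hK0 _ _)
      (Nat.cast_nonneg _)
  · obtain ⟨i₀, hi₀S, hi₀⟩ := Finset.exists_mem_eq_sup S hS
      (fun i => (Finset.univ.filter fun t => f t = some i).card)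
    set b : Option (Fin n) := some (g i₀) with hb
    set A : Finset (Fin T) := Finset.univ.filter (fun t => f t = some i₀) with hA
    -- pointwise: maxload of h is at least the indicator sum over A
    have hpoint : ∀ h : Fin T → Option (Fin n),
        (∑ t ∈ A, if h t = b then (1:ℝ) else 0)
          ≤ ((P.sup fun i => (Finset.univ.filter fun t => h t = some i).card : ℕ) : ℝ) := by
      intro h
      have h1 : ((Finset.univ.filter fun t => h t = b).card : ℝ)
          ≤ ((P.sup fun i => (Finset.univ.filter fun t => h t = some i).card : ℕ) : ℝ) := by
        exact_mod_cast Nat.cast_le.mpr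
          (Finset.le_sup (f := fun i => (Finset.univ.filter fun t => h t = some i).card)
            (hg i₀ hi₀S))
      refine le_trans ?_ h1
      rw [Finset.card_filter]
      push_cast
      exact Finset.sum_le_sum_of_subset_of_nonneg (Finset.subset_univ A)
        (fun t _ _ => by positivity)
    calc (1/2) * ((S.sup fun i => (Finset.univ.filter fun t => f t = some i).card : ℕ) : ℝ)
        = ∑ t ∈ A, (1:ℝ)/2 := by
          rw [Finset.sum_const, hi₀, hA]
          ring
      _ ≤ ∑ t ∈ A, K (f t) b := by
          refine Finset.sum_le_sum fun t ht => ?_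
          have hft : f t = some i₀ := (Finset.mem_filter.mp ht).2
          rw [hft, hb]
          exact hKg i₀ hi₀S
      _ = ∑ t ∈ A, ∑ h : Fin T → Option (Fin n),
            (∏ t', K (f t') (h t')) * (if h t = b then (1:ℝ) else 0) := by
          refine Finset.sum_congr rfl fun t _ => ?_
          rw [sum_prod_ind (fun t' => K (f t')) (fun t' => hrow (f t')) t b]
      _ = ∑ h : Fin T → Option (Fin n), (∏ t', K (f t') (h t')) *
            (∑ t ∈ A, if h t = b then (1:ℝ) else 0) := by
          rw [Finset.sum_comm]
          refine Finset.sum_congr rfl fun h _ => ?_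
          rw [Finset.mul_sum]
      _ ≤ _ := by
          refine Finset.sum_le_sum fun h _ => ?_
          exact mul_le_mul_of_nonneg_left (hpoint h)
            (Finset.prod_nonneg fun t _ => hK0 _ _)

lemma couple_abstract {n : ℕ} (T : ℕ) (v : Fin n → ℝ) (hv : ∀ i, 0 < v i)
    (S P : Finset (Fin n)) (g : Fin n → Fin n)
    (K : Option (Fin n) → Option (Fin n) → ℝ)
    (hK0 : ∀ o' o, 0 ≤ K o' o) (hrow : ∀ o', ∑ o, K o' o = 1)
    (hKg : ∀ x ∈ S, (1:ℝ)/2 ≤ K (some x) (some (g x)))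
    (hg : ∀ x ∈ S, g x ∈ P)
    (hmarg : ∀ o, ∑ o' : Option (Fin n), chooseProb v S o' * K o' o = chooseProb v P o) :
    (1/2) * staticEM T v S ≤ staticEM T v P := by
  have key : staticEM T v P
      = ∑ f : Fin T → Option (Fin n), (∏ t, chooseProb v S (f t)) *
          (∑ h : Fin T → Option (Fin n), (∏ t, K (f t) (h t)) *
            ((P.sup fun i => (Finset.univ.filter fun t => h t = some i).card : ℕ) : ℝ)) := by
    unfold staticEM
    have h1 : ∀ h : Fin T → Option (Fin n),
        (∏ t, chooseProb v P (h t))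
          = ∑ f : Fin T → Option (Fin n),
              ∏ t, (chooseProb v S (f t) * K (f t) (h t)) := by
      intro h
      have h2 : (∏ t, chooseProb v P (h t))
          = ∏ t, ∑ o' : Option (Fin n), chooseProb v S o' * K o' (h t) := by
        exact Finset.prod_congr rfl fun t _ => (hmarg (h t)).symm
      rw [h2, Finset.prod_univ_sum (fun _ => (univ : Finset (Option (Fin n))))
        (fun t o' => chooseProb v S o' * K o' (h t)), Fintype.piFinset_univ]
    calc ∑ h : Fin T → Option (Fin n), (∏ t, chooseProb v P (h t)) *
            ((P.sup fun i => (Finset.univ.filter fun t => h t = some i).card : ℕ) : ℝ)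
        = ∑ h : Fin T → Option (Fin n), ∑ f : Fin T → Option (Fin n),
            (∏ t, (chooseProb v S (f t) * K (f t) (h t))) *
            ((P.sup fun i => (Finset.univ.filter fun t => h t = some i).card : ℕ) : ℝ) := by
          refine Finset.sum_congr rfl fun h _ => ?_
          rw [h1 h, Finset.sum_mul]
      _ = ∑ f : Fin T → Option (Fin n), ∑ h : Fin T → Option (Fin n),
            (∏ t, (chooseProb v S (f t) * K (f t) (h t))) *
            ((P.sup fun i => (Finset.univ.filter fun t => h t = some i).card : ℕ) : ℝ) :=
          Finset.sum_comm
      _ = _ := by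
          refine Finset.sum_congr rfl fun f _ => ?_
          rw [Finset.mul_sum]
          refine Finset.sum_congr rfl fun h _ => ?_
          rw [Finset.prod_mul_distrib]
          ring
  rw [key]
  unfold staticEM
  rw [Finset.mul_sum]
  refine Finset.sum_le_sum fun f _ => ?_
  have hp : (0:ℝ) ≤ ∏ t, chooseProb v S (f t) :=
    Finset.prod_nonneg fun t _ => chooseProb_nonneg hv S (f t)
  have := inner_bound S P g K hK0 hrow hKg hg f
  calc (1/2) * ((∏ t, chooseProb v S (f t)) *
        ((S.sup fun i => (Finset.univ.filter fun t => f t = some i).card : ℕ) : ℝ))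
      = (∏ t, chooseProb v S (f t)) *
        ((1/2) * ((S.sup fun i => (Finset.univ.filter fun t => f t = some i).card : ℕ) : ℝ)) := by
        ring
    _ ≤ _ := mul_le_mul_of_nonneg_left this hp

section Kernel
variable {n : ℕ}

/-- fiber weight -/
noncomputable def FSa (v : Fin n → ℝ) (S : Finset (Fin n)) (g : Fin n → Fin n)
    (o : Option (Fin n)) : ℝ :=
  ∑ x ∈ S.filter (fun x => (some (g x) : Option (Fin n)) = o), v x

noncomputable def betaA (v : Fin n → ℝ) (S : Finset (Fin n)) : ℝ :=
  (1 + (∑ j ∈ S, v j)/2)/(1 + ∑ j ∈ S, v j)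

noncomputable def muA (v : Fin n → ℝ) (S P : Finset (Fin n)) (g : Fin n → Fin n)
    (o : Option (Fin n)) : ℝ :=
  (chooseProb v P o - (1/2) * (FSa v S g o / (1 + ∑ j ∈ S, v j))) / betaA v S

noncomputable def KA (v : Fin n → ℝ) (S P : Finset (Fin n)) (g : Fin n → Fin n)
    (o' o : Option (Fin n)) : ℝ :=
  match o' with
  | none => muA v S P g o
  | some x => if x ∈ S then
      ((if (some (g x) : Option (Fin n)) = o then (1:ℝ)/2 else 0) + muA v S P g o / 2)
    else muA v S P g o

variable (v : Fin n → ℝ) (S P : Finset (Fin n)) (g : Fin n → Fin n)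

lemma betaA_pos (hv : ∀ i, 0 < v i) : 0 < betaA v S := by
  have hW1 : (0:ℝ) < 1 + ∑ j ∈ S, v j := one_add_sum_pos hv S
  have : 0 ≤ ∑ j ∈ S, v j := Finset.sum_nonneg fun j _ => (hv j).le
  exact div_pos (by linarith) hW1

lemma FSa_none : FSa v S g none = 0 := by
  unfold FSa
  rw [Finset.filter_false_of_mem (fun x _ => by simp)]
  exact Finset.sum_empty

lemma fiber_chooseProb (hv : ∀ i, 0 < v i) (o : Option (Fin n)) :
    ∑ x ∈ S.filter (fun x => (some (g x) : Option (Fin n)) = o), chooseProb v S (some x)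
      = FSa v S g o / (1 + ∑ j ∈ S, v j) := by
  unfold FSa
  rw [Finset.sum_div]
  refine Finset.sum_congr rfl fun x hx => ?_
  exact chooseProb_some_mem hv (Finset.mem_filter.mp hx).1

lemma muA_nonneg (hv : ∀ i, 0 < v i) (hg : ∀ x ∈ S, g x ∈ P)
    (hpack : ∀ i ∈ P, ∑ x ∈ S.filter (fun x => g x = i), v x
        ≤ 2 * v i * (1 + ∑ j ∈ S, v j) / (1 + ∑ j ∈ P, v j)) (o : Option (Fin n)) :
    0 ≤ muA v S P g o := by
  have hW1 : (0:ℝ) < 1 + ∑ j ∈ S, v j := one_add_sum_pos hv S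
  have hV1 : (0:ℝ) < 1 + ∑ j ∈ P, v j := one_add_sum_pos hv P
  unfold muA
  refine div_nonneg ?_ (betaA_pos v S hv).le
  rw [sub_nonneg]
  cases o with
  | none =>
    rw [FSa_none]
    simp only [zero_div, mul_zero]
    simp only [chooseProb, phi0]
    positivity
  | some i =>
    by_cases hiP : i ∈ P
    · have hfe : FSa v S g (some i) = ∑ x ∈ S.filter (fun x => g x = i), v x := by
        unfold FSa
        congr 1
        refine Finset.filter_congr fun x _ => by simp
      rw [chooseProb_some_mem hv hiP, hfe]
      have h1 := hpack i hiP
      have h2 : (∑ x ∈ S.filter (fun x => g x = i), v x) / (1 + ∑ j ∈ S, v j)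
          ≤ (2 * v i * (1 + ∑ j ∈ S, v j) / (1 + ∑ j ∈ P, v j)) / (1 + ∑ j ∈ S, v j) :=
        (div_le_div_iff_of_pos_right hW1).mpr h1
      calc (1/2) * ((∑ x ∈ S.filter (fun x => g x = i), v x) / (1 + ∑ j ∈ S, v j))
          ≤ (1/2) * ((2 * v i * (1 + ∑ j ∈ S, v j) / (1 + ∑ j ∈ P, v j))
              / (1 + ∑ j ∈ S, v j)) := by
            exact mul_le_mul_of_nonneg_left h2 (by norm_num)
        _ = v i / (1 + ∑ j ∈ P, v j) := by
            field_simp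
    · have hfe : FSa v S g (some i) = 0 := by
        unfold FSa
        rw [Finset.filter_false_of_mem fun x hx => ?_]
        · exact Finset.sum_empty
        · simp only [Option.some_inj]
          intro hgx
          exact hiP (hgx ▸ hg x hx)
      rw [hfe]
      have : chooseProb v P (some i) = 0 := by simp [chooseProb, hiP]
      rw [this]
      simp

lemma muA_sum (hv : ∀ i, 0 < v i) : ∑ o, muA v S P g o = 1 := by
  have hW1 : (0:ℝ) < 1 + ∑ j ∈ S, v j := one_add_sum_pos hv S
  unfold muA
  rw [← Finset.sum_div]
  rw [Finset.sum_sub_distrib]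
  rw [sum_chooseProb hv P]
  have h1 : ∑ o : Option (Fin n), (1/2) * (FSa v S g o / (1 + ∑ j ∈ S, v j))
      = (1/2) * ((∑ j ∈ S, v j) / (1 + ∑ j ∈ S, v j)) := by
    rw [← Finset.mul_sum]
    congr 1
    rw [← Finset.sum_div]
    congr 1
    unfold FSa
    exact Finset.sum_fiberwise S (fun x => (some (g x) : Option (Fin n))) v
  rw [h1]
  unfold betaA
  have hb : (0:ℝ) < (1 + (∑ j ∈ S, v j) / 2) / (1 + ∑ j ∈ S, v j) := betaA_pos v S hv
  rw [div_eq_one_iff_eq hb.ne']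
  field_simp
  ring

lemma KA_nonneg (hv : ∀ i, 0 < v i) (hg : ∀ x ∈ S, g x ∈ P)
    (hpack : ∀ i ∈ P, ∑ x ∈ S.filter (fun x => g x = i), v x
        ≤ 2 * v i * (1 + ∑ j ∈ S, v j) / (1 + ∑ j ∈ P, v j)) (o' o : Option (Fin n)) :
    0 ≤ KA v S P g o' o := by
  have hμ := muA_nonneg v S P g hv hg hpack o
  cases o' with
  | none => exact hμ
  | some x =>
    simp only [KA]
    split
    · have : (0:ℝ) ≤ (if (some (g x) : Option (Fin n)) = o then (1:ℝ)/2 else 0) := by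
        split <;> norm_num
      linarith
    · exact hμ

lemma KA_row (hv : ∀ i, 0 < v i) (o' : Option (Fin n)) :
    ∑ o, KA v S P g o' o = 1 := by
  have hμ := muA_sum v S P g hv
  cases o' with
  | none => exact hμ
  | some x =>
    simp only [KA]
    split
    · rw [Finset.sum_add_distrib]
      have h1 : ∑ o : Option (Fin n), (if (some (g x) : Option (Fin n)) = o then (1:ℝ)/2 else 0)
          = 1/2 := by
        rw [Finset.sum_ite_eq Finset.univ (some (g x) : Option (Fin n)) (fun _ => (1:ℝ)/2)]
        simp
      have h2 : ∑ o : Option (Fin n), muA v S P g o / 2 = 1/2 := by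
        rw [← Finset.sum_div, hμ]
      rw [h1, h2]
      norm_num
    · exact hμ

lemma KA_diag (hv : ∀ i, 0 < v i) (hg : ∀ x ∈ S, g x ∈ P)
    (hpack : ∀ i ∈ P, ∑ x ∈ S.filter (fun x => g x = i), v x
        ≤ 2 * v i * (1 + ∑ j ∈ S, v j) / (1 + ∑ j ∈ P, v j))
    {x : Fin n} (hx : x ∈ S) :
    (1:ℝ)/2 ≤ KA v S P g (some x) (some (g x)) := by
  have hμ := muA_nonneg v S P g hv hg hpack (some (g x))
  simp only [KA, if_pos hx, eq_self_iff_true, if_true]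
  linarith

lemma KA_marginal (hv : ∀ i, 0 < v i) (o : Option (Fin n)) :
    ∑ o' : Option (Fin n), chooseProb v S o' * KA v S P g o' o = chooseProb v P o := by
  have hW1 : (0:ℝ) < 1 + ∑ j ∈ S, v j := one_add_sum_pos hv S
  rw [Fintype.sum_option]
  have hnone : chooseProb v S none = 1 / (1 + ∑ j ∈ S, v j) := by simp [chooseProb, phi0]
  have hsplit : ∀ x : Fin n, chooseProb v S (some x) * KA v S P g (some x) o
      = (if x ∈ S then (v x / (1 + ∑ j ∈ S, v j)) *
          ((if (some (g x) : Option (Fin n)) = o then (1:ℝ)/2 else 0) + muA v S P g o / 2)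
        else 0) := by
    intro x
    by_cases hx : x ∈ S
    · rw [if_pos hx, chooseProb_some_mem hv hx]
      simp only [KA, if_pos hx]
    · rw [if_neg hx]
      have : chooseProb v S (some x) = 0 := by simp [chooseProb, hx]
      rw [this, zero_mul]
  simp only [hsplit]
  rw [Finset.sum_ite_mem, Finset.univ_inter]
  have hexp : ∑ x ∈ S, (v x / (1 + ∑ j ∈ S, v j)) *
      ((if (some (g x) : Option (Fin n)) = o then (1:ℝ)/2 else 0) + muA v S P g o / 2)
      = (1/2) * (FSa v S g o / (1 + ∑ j ∈ S, v j))
        + (muA v S P g o / 2) * ((∑ j ∈ S, v j) / (1 + ∑ j ∈ S, v j)) := by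
    simp only [mul_add]
    rw [Finset.sum_add_distrib]
    congr 1
    · simp only [mul_ite, mul_one, mul_zero]
      rw [Finset.sum_ite, Finset.sum_const_zero, add_zero]
      unfold FSa
      rw [Finset.sum_div, Finset.mul_sum]
      exact Finset.sum_congr rfl fun x _ => by ring
    · rw [← Finset.sum_mul, ← Finset.sum_div]
      ring
  rw [hexp, hnone]
  simp only [KA]
  have hβ := betaA_pos v S hv
  have : muA v S P g o * betaA v S
      = chooseProb v P o - (1/2) * (FSa v S g o / (1 + ∑ j ∈ S, v j)) := by
    unfold muA
    exact div_mul_cancel₀ _ hβ.ne'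
  have hgoal : 1 / (1 + ∑ j ∈ S, v j) * muA v S P g o
      + ((1/2) * (FSa v S g o / (1 + ∑ j ∈ S, v j))
        + (muA v S P g o / 2) * ((∑ j ∈ S, v j) / (1 + ∑ j ∈ S, v j)))
      = muA v S P g o * betaA v S + (1/2) * (FSa v S g o / (1 + ∑ j ∈ S, v j)) := by
    unfold betaA
    field_simp
    ring
  rw [hgoal, this]
  ring
end Kernel

lemma half_of_pack {n : ℕ} (T : ℕ) (v : Fin n → ℝ) (hv : ∀ i, 0 < v i)
    (S P : Finset (Fin n)) (g : Fin n → Fin n)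
    (hg : ∀ x ∈ S, g x ∈ P)
    (hpack : ∀ i ∈ P, ∑ x ∈ S.filter (fun x => g x = i), v x
        ≤ 2 * v i * (1 + ∑ j ∈ S, v j) / (1 + ∑ j ∈ P, v j)) :
    (1/2) * staticEM T v S ≤ staticEM T v P :=
  couple_abstract T v hv S P g (KA v S P g)
    (KA_nonneg v S P g hv hg hpack) (KA_row v S P g hv)
    (fun x hx => KA_diag v S P g hv hg hpack hx) hg (KA_marginal v S P g hv)

lemma exists_packing {n : ℕ} (v : Fin n → ℝ) (hv : ∀ i, 0 < v i)
    (hsorted : ∀ i j : Fin n, i ≤ j → v j ≤ v i)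
    (k : ℕ) (hk : 0 < k) (c : Fin k → ℝ) (hc0 : ∀ i, 0 ≤ c i)
    (hcap : ∀ (i : Fin k) (x : Fin n), (i:ℕ) ≤ (x:ℕ) → v x ≤ c i)
    (S : Finset (Fin n)) (htot : 2 * (∑ x ∈ S, v x) ≤ ∑ i, c i) :
    ∃ g : Fin n → Fin k, ∀ i : Fin k, ∑ x ∈ S.filter (fun x => g x = i), v x ≤ c i := by
  classical
  induction S using Finset.strongInduction with
  | _ S ih =>
  rcases S.eq_empty_or_nonempty with hS | hS
  · subst hS
    exact ⟨fun _ => ⟨0, hk⟩, fun i => by simp [hc0 i]⟩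
  · set x := S.max' hS with hxdef
    have hxS : x ∈ S := S.max'_mem hS
    set S' := S.erase x with hS'def
    have hsum_split : ∑ y ∈ S', v y + v x = ∑ y ∈ S, v y := Finset.sum_erase_add S v hxS
    have htot' : 2 * (∑ y ∈ S', v y) ≤ ∑ i, c i := by
      have := hv x
      linarith
    obtain ⟨g', hg'⟩ := ih S' (Finset.erase_ssubset hxS) htot'
    have hex : ∃ i₀ : Fin k,
        (∑ y ∈ S'.filter (fun y => g' y = i₀), v y) + v x ≤ c i₀ := by
      by_contra hcon
      push_neg at hcon
      set E := Finset.univ.filter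
        (fun i : Fin k => S'.filter (fun y => g' y = i) = ∅) with hEdef
      by_cases hE : E.Nonempty
      · set i₀ := E.min' hE with hi₀def
        have hi₀E : i₀ ∈ E := E.min'_mem hE
        have hload0 : S'.filter (fun y => g' y = i₀) = ∅ :=
          (Finset.mem_filter.mp hi₀E).2
        -- every bin below i₀ is hit by g' on S'
        have hIio : Finset.Iio i₀ ⊆ S'.image g' := by
          intro i hi
          have hilt : i < i₀ := Finset.mem_Iio.mp hi
          have hiE : i ∉ E := fun hiE => absurd (E.min'_le i hiE) (not_le.mpr hilt)
          have : S'.filter (fun y => g' y = i) ≠ ∅ := by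
            intro h
            exact hiE (Finset.mem_filter.mpr ⟨Finset.mem_univ i, h⟩)
          obtain ⟨y, hy⟩ := Finset.nonempty_iff_ne_empty.mpr this
          exact Finset.mem_image.mpr ⟨y, (Finset.mem_filter.mp hy).1,
            (Finset.mem_filter.mp hy).2⟩
        have hcard1 : (i₀ : ℕ) ≤ S'.card := by
          have h1 : (Finset.Iio i₀).card ≤ (S'.image g').card := Finset.card_le_card hIio
          have h2 : (S'.image g').card ≤ S'.card := Finset.card_image_le
          rw [Fin.card_Iio] at h1
          exact h1.trans h2
        have hcard2 : S.card ≤ (x : ℕ) + 1 := by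
          have hsub : S ⊆ Finset.Iic x := fun y hy => Finset.mem_Iic.mpr (S.le_max' y hy)
          have := Finset.card_le_card hsub
          rwa [Fin.card_Iic] at this
        have hix : (i₀ : ℕ) ≤ (x : ℕ) := by
          have : S'.card = S.card - 1 := Finset.card_erase_of_mem hxS
          have hSpos : 1 ≤ S.card := Finset.card_pos.mpr hS
          omega
        have hvx : v x ≤ c i₀ := hcap i₀ x hix
        have := hcon i₀
        rw [hload0] at this
        simp only [Finset.sum_empty, zero_add] at this
        exact absurd hvx (not_le.mpr this)
      · -- all fibers nonempty: counting contradiction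
        have hfib : ∀ i : Fin k, v x ≤ ∑ y ∈ S'.filter (fun y => g' y = i), v y := by
          intro i
          have hiE : i ∉ E := fun h => hE ⟨i, h⟩
          have : S'.filter (fun y => g' y = i) ≠ ∅ := by
            intro h
            exact hiE (Finset.mem_filter.mpr ⟨Finset.mem_univ i, h⟩)
          obtain ⟨y, hy⟩ := Finset.nonempty_iff_ne_empty.mpr this
          have hyS' : y ∈ S' := (Finset.mem_filter.mp hy).1
          have hyx : v x ≤ v y := by
            refine hsorted y x ?_
            exact S.le_max' y (Finset.mem_of_mem_erase hyS')
          refine le_trans hyx ?_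
          exact Finset.single_le_sum (fun z _ => (hv z).le) hy
        have hstrict : ∑ i : Fin k, c i
            < ∑ i : Fin k, ((∑ y ∈ S'.filter (fun y => g' y = i), v y) + v x) := by
          refine Finset.sum_lt_sum_of_nonempty ?_ fun i _ => hcon i
          exact Finset.univ_nonempty_iff.mpr (Fin.pos_iff_nonempty.mp hk)
        have hsplit2 : ∑ i : Fin k, ((∑ y ∈ S'.filter (fun y => g' y = i), v y) + v x)
            = (∑ y ∈ S', v y) + k * v x := by
          rw [Finset.sum_add_distrib, Finset.sum_const, Finset.card_univ, Fintype.card_fin]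
          rw [Finset.sum_fiberwise S' g' v]
          simp [nsmul_eq_mul]
        have hkv : (k : ℝ) * v x ≤ ∑ y ∈ S', v y := by
          calc (k : ℝ) * v x = ∑ _i : Fin k, v x := by
                rw [Finset.sum_const, Finset.card_univ, Fintype.card_fin, nsmul_eq_mul]
            _ ≤ ∑ i : Fin k, ∑ y ∈ S'.filter (fun y => g' y = i), v y :=
                Finset.sum_le_sum fun i _ => hfib i
            _ = ∑ y ∈ S', v y := Finset.sum_fiberwise S' g' v
        rw [hsplit2] at hstrict
        have := hv x
        linarith
    obtain ⟨i₀, hi₀⟩ := hex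
    refine ⟨Function.update g' x i₀, fun i => ?_⟩
    have hSet : S = insert x S' := (Finset.insert_erase hxS).symm
    have hfcongr : S'.filter (fun y => Function.update g' x i₀ y = i)
        = S'.filter (fun y => g' y = i) := by
      refine Finset.filter_congr fun y hy => ?_
      rw [Function.update_of_ne (Finset.ne_of_mem_erase hy)]
    rw [hSet, Finset.filter_insert, Function.update_self]
    by_cases hii : i₀ = i
    · rw [if_pos hii]
      have hxnot : x ∉ S'.filter (fun y => Function.update g' x i₀ y = i) := by
        intro h
        exact (Finset.notMem_erase x S) (Finset.mem_filter.mp h).1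
      rw [Finset.sum_insert hxnot, hfcongr]
      subst hii
      linarith [hi₀]
    · rw [if_neg hii, hfcongr]
      exact hg' i

lemma exists_prefix_pack {n : ℕ} (hn : 1 ≤ n) (v : Fin n → ℝ) (hv : ∀ i, 0 < v i)
    (hsorted : ∀ i j : Fin n, i ≤ j → v j ≤ v i) (S : Finset (Fin n)) :
    ∃ k : ℕ, 1 ≤ k ∧ k ≤ n ∧ ∃ g : Fin n → Fin n,
      (∀ x ∈ S, g x ∈ Finset.univ.filter (fun i : Fin n => (i:ℕ) < k)) ∧
      (∀ i ∈ Finset.univ.filter (fun i : Fin n => (i:ℕ) < k),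
        ∑ x ∈ S.filter (fun x => g x = i), v x
          ≤ 2 * v i * (1 + ∑ j ∈ S, v j)
            / (1 + ∑ j ∈ Finset.univ.filter (fun i : Fin n => (i:ℕ) < k), v j)) := by
  classical
  set W := ∑ j ∈ S, v j with hWdef
  have hW0 : 0 ≤ W := Finset.sum_nonneg fun j _ => (hv j).le
  have hW1 : (0:ℝ) < 1 + W := by linarith
  set z : Fin n := ⟨0, hn⟩ with hzdef
  have hP1 : Finset.univ.filter (fun i : Fin n => (i:ℕ) < 1) = {z} := by
    ext i
    simp only [Finset.mem_filter, Finset.mem_univ, true_and, Finset.mem_singleton,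
      Nat.lt_one_iff]
    constructor
    · intro h
      exact Fin.ext h
    · intro h
      rw [h]
  by_cases hcase : W ≤ v z
  · -- Case A : one big item suffices
    refine ⟨1, le_refl 1, hn, fun _ => z, ?_, ?_⟩
    · intro x _
      rw [hP1]
      exact Finset.mem_singleton_self z
    · intro i hi
      rw [hP1] at hi
      have hiz : i = z := Finset.mem_singleton.mp hi
      rw [hiz, hP1, Finset.sum_singleton]
      have hfilter : S.filter (fun _x => z = z) = S :=
        Finset.filter_true_of_mem fun x _ => rfl
      rw [hfilter, ← hWdef]
      have hvz1 : (0:ℝ) < 1 + v z := by have := hv z; linarith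
      rw [le_div_iff₀ hvz1]
      have hvz := hv z
      nlinarith [hcase, hW0, hvz]
  · -- Case B
    push_neg at hcase
    have hWpos : 0 < W := lt_trans (hv z) hcase
    set Vf : ℕ → ℝ := fun l => ∑ j ∈ Finset.univ.filter (fun i : Fin n => (i:ℕ) < l), v j
      with hVfdef
    set L := (Finset.Icc 1 n).filter (fun l => Vf l ≤ 1 + 2*W) with hLdef
    have hV1 : Vf 1 = v z := by
      rw [hVfdef]
      simp only
      rw [hP1, Finset.sum_singleton]
    have h1L : 1 ∈ L := by
      rw [hLdef]
      refine Finset.mem_filter.mpr ⟨Finset.mem_Icc.mpr ⟨le_refl 1, hn⟩, ?_⟩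
      rw [hV1]
      linarith
    have hL : L.Nonempty := ⟨1, h1L⟩
    set k := L.max' hL with hkdef
    have hkL : k ∈ L := L.max'_mem hL
    have hk1 : 1 ≤ k := Finset.mem_Icc.mp (Finset.mem_filter.mp hkL).1 |>.1
    have hkn : k ≤ n := Finset.mem_Icc.mp (Finset.mem_filter.mp hkL).1 |>.2
    have hVk : Vf k ≤ 1 + 2*W := (Finset.mem_filter.mp hkL).2
    have hVk0 : 0 ≤ Vf k := Finset.sum_nonneg fun j _ => (hv j).le
    have hVk1 : (0:ℝ) < 1 + Vf k := by linarith
    -- W ≤ Vf k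
    have hWVk : W ≤ Vf k := by
      by_cases hkn' : k = n
      · have huniv : Finset.univ.filter (fun i : Fin n => (i:ℕ) < n) = Finset.univ := by
          refine Finset.filter_true_of_mem fun i _ => i.isLt
        rw [hVfdef]
        simp only
        rw [hkn', huniv, hWdef]
        exact Finset.sum_le_sum_of_subset_of_nonneg (Finset.subset_univ S)
          (fun x _ _ => (hv x).le)
      · have hklt : k < n := lt_of_le_of_ne hkn hkn'
        have hk1n : k + 1 ∉ L := by
          intro hmem
          have := L.le_max' (k+1) hmem
          omega
        have hk1Icc : k + 1 ∈ Finset.Icc 1 n := Finset.mem_Icc.mpr ⟨by omega, by omega⟩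
        have hVk1' : ¬ (Vf (k+1) ≤ 1 + 2*W) := by
          intro h
          exact hk1n (Finset.mem_filter.mpr ⟨hk1Icc, h⟩)
        push_neg at hVk1'
        have hstep : Vf (k+1) = Vf k + v ⟨k, hklt⟩ := by
          rw [hVfdef]
          simp only
          have : Finset.univ.filter (fun i : Fin n => (i:ℕ) < k + 1)
              = insert (⟨k, hklt⟩ : Fin n) (Finset.univ.filter (fun i : Fin n => (i:ℕ) < k)) := by
            ext i
            simp only [Finset.mem_filter, Finset.mem_univ, true_and, Finset.mem_insert,
              Fin.ext_iff]
            omega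
          rw [this, Finset.sum_insert (by simp)]
          ring
        have hvk0 : v ⟨k, hklt⟩ ≤ v z := by
          refine hsorted z ⟨k, hklt⟩ ?_
          simp [hzdef, Fin.le_def]
        rw [hstep] at hVk1'
        linarith
    -- build capacities and apply packing
    set c : Fin k → ℝ := fun i =>
      2 * v ⟨(i:ℕ), lt_of_lt_of_le i.isLt hkn⟩ * (1 + W) / (1 + Vf k) with hcdef
    have hc0 : ∀ i, 0 ≤ c i := by
      intro i
      rw [hcdef]
      have := hv ⟨(i:ℕ), lt_of_lt_of_le i.isLt hkn⟩
      positivity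
    have hcap : ∀ (i : Fin k) (x : Fin n), (i:ℕ) ≤ (x:ℕ) → v x ≤ c i := by
      intro i x hix
      rw [hcdef]
      simp only
      have h1 : v x ≤ v ⟨(i:ℕ), lt_of_lt_of_le i.isLt hkn⟩ := by
        refine hsorted ⟨(i:ℕ), _⟩ x ?_
        simp [Fin.le_def, hix]
      rw [le_div_iff₀ hVk1]
      have hvi := hv ⟨(i:ℕ), lt_of_lt_of_le i.isLt hkn⟩
      nlinarith [hVk, hW0, hv x]
    have hVsum : ∑ i : Fin k, v ⟨(i:ℕ), lt_of_lt_of_le i.isLt hkn⟩ = Vf k := by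
      rw [hVfdef]
      simp only
      refine Finset.sum_bij' (fun (i : Fin k) _ => (⟨(i:ℕ), lt_of_lt_of_le i.isLt hkn⟩ : Fin n))
        (fun (j : Fin n) hj => (⟨(j:ℕ), (Finset.mem_filter.mp hj).2⟩ : Fin k))
        ?_ ?_ ?_ ?_ ?_
      · intro a _
        simp
      · intro a ha
        simp
      · intro a _
        simp
      · intro a ha
        simp
      · intro a _
        rfl
    have htot : 2 * (∑ x ∈ S, v x) ≤ ∑ i, c i := by
      rw [hcdef]
      simp only
      rw [← hWdef]
      have : ∑ i : Fin k, 2 * v ⟨(i:ℕ), lt_of_lt_of_le i.isLt hkn⟩ * (1 + W) / (1 + Vf k)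
          = 2 * (1 + W) / (1 + Vf k) * Vf k := by
        rw [← hVsum, Finset.mul_sum]
        refine Finset.sum_congr rfl fun i _ => by ring
      rw [this, div_mul_eq_mul_div, le_div_iff₀ hVk1]
      nlinarith [hWVk, hW0, hVk0, hW1]
    obtain ⟨g₀, hg₀⟩ := exists_packing v hv hsorted k hk1 c hc0 hcap S htot
    refine ⟨k, hk1, hkn, fun x => ⟨(g₀ x : ℕ), lt_of_lt_of_le (g₀ x).isLt hkn⟩, ?_, ?_⟩
    · intro x _
      exact Finset.mem_filter.mpr ⟨Finset.mem_univ _, (g₀ x).isLt⟩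
    · intro i hi
      have hik : (i:ℕ) < k := (Finset.mem_filter.mp hi).2
      have hfe : S.filter (fun x => (⟨(g₀ x : ℕ), lt_of_lt_of_le (g₀ x).isLt hkn⟩ : Fin n) = i)
          = S.filter (fun x => g₀ x = ⟨(i:ℕ), hik⟩) := by
        refine Finset.filter_congr fun x _ => ?_
        simp [Fin.ext_iff]
      rw [hfe]
      have := hg₀ ⟨(i:ℕ), hik⟩
      rw [hcdef] at this
      simp only at this
      have hieq : (⟨((⟨(i:ℕ), hik⟩ : Fin k) : ℕ), lt_of_lt_of_le (⟨(i:ℕ), hik⟩ : Fin k).isLt hkn⟩ : Fin n) = i := by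
        simp [Fin.ext_iff]
      rw [hieq] at this
      exact this


/-- Some preference-weight-ordered assortment (a prefix `{1,…,m}` of the products sorted
by weakly decreasing preference weight) is a 1/2-approximation for the static maximum
load assortment problem. -/
theorem weight_ordered_half_approximation
    (n T : ℕ) (hn : 1 ≤ n) (v : Fin n → ℝ) (hv : ∀ i, 0 < v i)
    (hsorted : ∀ i j : Fin n, i ≤ j → v j ≤ v i) :
    ∃ m : ℕ, 1 ≤ m ∧ m ≤ n ∧
      staticEM T v (Finset.univ.filter fun i => (i : ℕ) < m) ≥
        (1 / 2) *
          Finset.univ.powerset.sup' ⟨∅, Finset.empty_mem_powerset _⟩ (staticEM T v) := by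
  have hne : ((Finset.univ : Finset (Fin n)).powerset).Nonempty :=
    ⟨∅, Finset.empty_mem_powerset _⟩
  obtain ⟨S₀, hS₀mem, hS₀⟩ :=
    Finset.exists_mem_eq_sup' hne (staticEM T v)
  obtain ⟨k, hk1, hkn, g, hg, hpack⟩ := exists_prefix_pack hn v hv hsorted S₀
  refine ⟨k, hk1, hkn, ?_⟩
  rw [ge_iff_le, hS₀]
  exact half_of_pack T v hv S₀ _ g hg hpack
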